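/- Suppose V : ℝⁿ → ℝ is measurable, e^{−V} is integrable, and x ↦ α|x−x₀|²/2 − V(x) defines a subharmonic function for every x₀ ∈ ℝⁿ (equivalently Δ V ≤ αn distributionally), where α > 0. Then for every x₀ with |x₀| > R, e^{−V(x₀)} ≤ (e^{α/2}/Vol(B₁)) ∫_{|x| ≥ R−1} e^{−V(x)} dx; consequently V(x₀) → ∞ as |x₀| → ∞. -/

import Mathlib

open MeasureTheory Metric Filter

/-- If `e^{-V}` is integrable and, for every `x₀`, the function
`x ↦ e^{α|x-x₀|²/2 - V(x)}` is subharmonic (encoded by the sub-mean-value inequality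
over balls), then for every `x₀` with `|x₀| > R`,
`e^{-V(x₀)} ≤ (e^{α/2}/Vol(B₁)) ∫_{|x| ≥ R-1} e^{-V}`; consequently `V(x₀) → ∞`
as `|x₀| → ∞`. -/
theorem stmt19 (n : ℕ) (hn : 0 < n) (α : ℝ) (hα : 0 < α)
    (V : EuclideanSpace ℝ (Fin n) → ℝ) (hmeas : Measurable V)
    (hint : Integrable (fun x => Real.exp (-V x)) volume)
    (hsub : ∀ x₀ : EuclideanSpace ℝ (Fin n), ∀ r > (0 : ℝ),
      Real.exp (-V x₀) ≤
        ⨍ x in ball x₀ r, Real.exp (α * ‖x - x₀‖ ^ 2 / 2 - V x) ∂volume) :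
    (∀ R : ℝ, ∀ x₀ : EuclideanSpace ℝ (Fin n), R < ‖x₀‖ →
      Real.exp (-V x₀) ≤
        (Real.exp (α / 2) / (volume (ball (0 : EuclideanSpace ℝ (Fin n)) 1)).toReal) *
          ∫ x in {x : EuclideanSpace ℝ (Fin n) | R - 1 ≤ ‖x‖}, Real.exp (-V x)) ∧
    Tendsto V (cocompact (EuclideanSpace ℝ (Fin n))) atTop := by
  have hballpos : 0 < (volume (ball (0 : EuclideanSpace ℝ (Fin n)) 1)).toReal := by
    refine ENNReal.toReal_pos (measure_ball_pos volume 0 one_pos).ne' measure_ball_lt_top.ne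
  -- measurability of the sets {x | c ≤ ‖x‖}
  have hsetmeas : ∀ c : ℝ, MeasurableSet {x : EuclideanSpace ℝ (Fin n) | c ≤ ‖x‖} :=
    fun c => (isClosed_le continuous_const continuous_norm).measurableSet
  set g : ℝ → ℝ := fun c => ∫ x in {x : EuclideanSpace ℝ (Fin n) | c ≤ ‖x‖}, Real.exp (-V x)
    with hg
  have hganti : ∀ {c c' : ℝ}, c ≤ c' → g c' ≤ g c := by
    intro c c' hcc
    refine setIntegral_mono_set hint.integrableOn
      (Filter.Eventually.of_forall fun x => (Real.exp_pos _).le)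
      (HasSubset.Subset.eventuallyLE fun x hx => le_trans hcc hx)
  have hgnonneg : ∀ c, 0 ≤ g c := fun c =>
    setIntegral_nonneg (hsetmeas c) fun x _ => (Real.exp_pos _).le
  -- Main estimate
  have key : ∀ R : ℝ, ∀ x₀ : EuclideanSpace ℝ (Fin n), R < ‖x₀‖ →
      Real.exp (-V x₀) ≤
        (Real.exp (α / 2) / (volume (ball (0 : EuclideanSpace ℝ (Fin n)) 1)).toReal) *
          g (R - 1) := by
    intro R x₀ hR
    have h1 := hsub x₀ 1 one_pos
    rw [setAverage_eq] at h1
    have hballsub : ball x₀ 1 ⊆ {x : EuclideanSpace ℝ (Fin n) | R - 1 ≤ ‖x‖} := by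
      intro x hx
      simp only [mem_ball, dist_eq_norm] at hx
      have : ‖x₀‖ - ‖x‖ ≤ ‖x₀ - x‖ := norm_sub_norm_le _ _
      rw [norm_sub_rev] at this
      simp only [Set.mem_setOf_eq]
      linarith
    -- integrability of the subharmonic integrand on the ball
    have hintball : IntegrableOn (fun x => Real.exp (α * ‖x - x₀‖ ^ 2 / 2 - V x))
        (ball x₀ 1) volume := by
      refine Integrable.mono (hint.const_mul (Real.exp (α / 2))).integrableOn
        ((((measurable_const.mul
          (((measurable_id.sub measurable_const).norm.pow measurable_const))).div
          measurable_const).sub hmeas).exp.aestronglyMeasurable) ?_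
      refine (ae_restrict_iff' measurableSet_ball).2 (Filter.Eventually.of_forall ?_)
      intro x hx
      simp only [mem_ball, dist_eq_norm] at hx
      rw [Real.norm_of_nonneg (Real.exp_pos _).le, Real.norm_of_nonneg
        (mul_nonneg (Real.exp_pos _).le (Real.exp_pos _).le)]
      rw [← Real.exp_add]
      apply Real.exp_le_exp.2
      have h2 : ‖x - x₀‖ ^ 2 ≤ 1 := by
        have := norm_nonneg (x - x₀)
        nlinarith
      nlinarith
    have h2 : ∫ x in ball x₀ 1, Real.exp (α * ‖x - x₀‖ ^ 2 / 2 - V x) ≤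
        Real.exp (α / 2) * g (R - 1) := by
      calc ∫ x in ball x₀ 1, Real.exp (α * ‖x - x₀‖ ^ 2 / 2 - V x)
          ≤ ∫ x in ball x₀ 1, Real.exp (α / 2) * Real.exp (-V x) := by
            refine setIntegral_mono_on hintball
              ((hint.const_mul (Real.exp (α / 2))).integrableOn) measurableSet_ball ?_
            intro x hx
            simp only [mem_ball, dist_eq_norm] at hx
            rw [← Real.exp_add]
            apply Real.exp_le_exp.2
            have h2 : ‖x - x₀‖ ^ 2 ≤ 1 := by
              have := norm_nonneg (x - x₀)
              nlinarith
            nlinarith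
        _ = Real.exp (α / 2) * ∫ x in ball x₀ 1, Real.exp (-V x) := by
            rw [integral_const_mul]
        _ ≤ Real.exp (α / 2) * g (R - 1) := by
            refine mul_le_mul_of_nonneg_left ?_ (Real.exp_pos _).le
            exact setIntegral_mono_set hint.integrableOn
              (Filter.Eventually.of_forall fun x => (Real.exp_pos _).le)
              (HasSubset.Subset.eventuallyLE hballsub)
    have hvol : volume (ball x₀ 1) = volume (ball (0 : EuclideanSpace ℝ (Fin n)) 1) :=
      Measure.addHaar_ball_center volume x₀ 1
    rw [measureReal_def, hvol, smul_eq_mul] at h1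
    calc Real.exp (-V x₀)
        ≤ (volume (ball (0 : EuclideanSpace ℝ (Fin n)) 1)).toReal⁻¹ *
            ∫ x in ball x₀ 1, Real.exp (α * ‖x - x₀‖ ^ 2 / 2 - V x) := h1
      _ ≤ (volume (ball (0 : EuclideanSpace ℝ (Fin n)) 1)).toReal⁻¹ *
            (Real.exp (α / 2) * g (R - 1)) := by
          exact mul_le_mul_of_nonneg_left h2 (inv_nonneg.2 hballpos.le)
      _ = (Real.exp (α / 2) / (volume (ball (0 : EuclideanSpace ℝ (Fin n)) 1)).toReal) *
            g (R - 1) := by ring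
  refine ⟨key, ?_⟩
  -- g tends to 0 along naturals
  have hgnat : Tendsto (fun k : ℕ => g (k : ℝ)) atTop (nhds 0) := by
    have h0 : (0 : ℝ) = ∫ x : EuclideanSpace ℝ (Fin n), (0 : ℝ) := by simp
    have heq : ∀ k : ℕ, g (k : ℝ) =
        ∫ x : EuclideanSpace ℝ (Fin n),
          {x : EuclideanSpace ℝ (Fin n) | (k : ℝ) ≤ ‖x‖}.indicator
            (fun x => Real.exp (-V x)) x := by
      intro k
      rw [hg]
      exact (integral_indicator (hsetmeas _)).symm
    rw [h0]
    simp only [heq]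
    refine tendsto_integral_of_dominated_convergence (fun x => Real.exp (-V x))
      (fun k => (hmeas.neg.exp.indicator (hsetmeas _)).aestronglyMeasurable)
      hint ?_ ?_
    · intro k
      refine Filter.Eventually.of_forall fun x => ?_
      rw [Real.norm_of_nonneg (Set.indicator_nonneg (fun x _ => (Real.exp_pos _).le) x)]
      exact Set.indicator_le_self' (fun x _ => (Real.exp_pos _).le) x
    · refine Filter.Eventually.of_forall fun x => ?_
      have : ∀ᶠ k : ℕ in atTop,
          {x : EuclideanSpace ℝ (Fin n) | (k : ℝ) ≤ ‖x‖}.indicator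
            (fun x => Real.exp (-V x)) x = 0 := by
        filter_upwards [eventually_gt_atTop ⌈‖x‖⌉₊] with k hk
        refine Set.indicator_of_notMem ?_ _
        simp only [Set.mem_setOf_eq, not_le]
        calc ‖x‖ ≤ (⌈‖x‖⌉₊ : ℝ) := Nat.le_ceil _
          _ < (k : ℝ) := by exact_mod_cast hk
      exact Tendsto.congr' (this.mono fun k hk => hk.symm) tendsto_const_nhds
  -- conclude the cocompact limit
  rw [Filter.tendsto_atTop]
  intro M
  set C : ℝ := Real.exp (α / 2) / (volume (ball (0 : EuclideanSpace ℝ (Fin n)) 1)).toReal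
    with hC
  have hCpos : 0 < C := div_pos (Real.exp_pos _) hballpos
  have hε : 0 < Real.exp (-M) / C := div_pos (Real.exp_pos _) hCpos
  obtain ⟨N, hN⟩ := (Filter.tendsto_atTop'.1 hgnat) (Set.Iio (Real.exp (-M) / C))
    (Iio_mem_nhds (by simpa using hε))
  rw [hasBasis_cocompact.eventually_iff]
  refine ⟨closedBall 0 ((N : ℝ) + 1), isCompact_closedBall _ _, ?_⟩
  intro x₀ hx₀
  simp only [Set.mem_compl_iff, mem_closedBall, dist_zero_right, not_le] at hx₀
  have hkey := key ((N : ℝ) + 1) x₀ hx₀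
  have hgN : g ((N : ℝ) + 1 - 1) ≤ g (N : ℝ) := hganti (by norm_num)
  have hNlt : g (N : ℝ) < Real.exp (-M) / C := hN N le_rfl
  have hlt : Real.exp (-V x₀) < Real.exp (-M) := by
    calc Real.exp (-V x₀) ≤ C * g ((N : ℝ) + 1 - 1) := hkey
      _ ≤ C * g (N : ℝ) := mul_le_mul_of_nonneg_left hgN hCpos.le
      _ < C * (Real.exp (-M) / C) := by exact mul_lt_mul_of_pos_left hNlt hCpos
      _ = Real.exp (-M) := by field_simp
  have := Real.exp_lt_exp.1 hlt
  linarith
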